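/- Suppose (π²ε² + 1)α ≥ 1. Then, for any continuous 1-periodic substrate ψ, every global minimizer of the energy E over admissible curves is a graph curve (i.e., satisfies x'(t) > 0 for all t). -/

import Mathlib

set_option maxHeartbeats 1000000


open MeasureTheory Real Set

noncomputable section

/-- The (signed) curvature of a planar curve `γ` at parameter `t`. -/
def curvature (γ : ℝ → ℝ × ℝ) (t : ℝ) : ℝ :=
  ((deriv γ t).1 * (deriv (deriv γ) t).2 - (deriv γ t).2 * (deriv (deriv γ) t).1)
    / ‖deriv γ t‖ ^ 3

/-- Admissible curves above the substrate ψ: regular curves of Sobolev class H²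
(modelled as C²) confined in the closed epigraph of ψ, satisfying the periodic
boundary conditions x(0)=0, x(1)=1, y(0)=y(1), γ'(0)=γ'(1). -/
def Admissible (ψ : ℝ → ℝ) (γ : ℝ → ℝ × ℝ) : Prop :=
  ContDiff ℝ 2 γ ∧ (∀ t ∈ Icc (0:ℝ) 1, deriv γ t ≠ 0) ∧
  (∀ t ∈ Icc (0:ℝ) 1, ψ (γ t).1 ≤ (γ t).2) ∧
  (γ 0).1 = 0 ∧ (γ 1).1 = 1 ∧ (γ 0).2 = (γ 1).2 ∧ deriv γ 0 = deriv γ 1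

/-- The contact potential: Θ = α on the graph of ψ, Θ = 1 off it. -/
def contactPotential (ψ : ℝ → ℝ) (α : ℝ) (p : ℝ × ℝ) : ℝ :=
  if p.2 = ψ p.1 then α else 1

/-- Total energy of one period: E[γ] = ∫ [ε²κ² + Θ(γ)] ds. -/
def Energy (ψ : ℝ → ℝ) (α ε : ℝ) (γ : ℝ → ℝ × ℝ) : ℝ :=
  ∫ t in Icc (0:ℝ) 1, (ε ^ 2 * curvature γ t ^ 2 + contactPotential ψ α (γ t)) * ‖deriv γ t‖

/-- Length of one period of the curve. -/
def Length (γ : ℝ → ℝ × ℝ) : ℝ := ∫ t in Icc (0:ℝ) 1, ‖deriv γ t‖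

/-- A curve is a graph curve if x'(t) > 0 for all t. -/
def IsGraph (γ : ℝ → ℝ × ℝ) : Prop := ∀ t ∈ Icc (0:ℝ) 1, 0 < (deriv γ t).1


lemma hasDerivAt_fst {f : ℝ → ℝ × ℝ} {f' : ℝ × ℝ} {t : ℝ} (h : HasDerivAt f f' t) :
    HasDerivAt (fun t => (f t).1) f'.1 t := by
  have h2 := h.hasFDerivAt.fst
  rw [hasDerivAt_iff_hasFDerivAt]
  exact h2

lemma hasDerivAt_snd {f : ℝ → ℝ × ℝ} {f' : ℝ × ℝ} {t : ℝ} (h : HasDerivAt f f' t) :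
    HasDerivAt (fun t => (f t).2) f'.2 t := by
  have h2 := h.hasFDerivAt.snd
  rw [hasDerivAt_iff_hasFDerivAt]
  exact h2

lemma aux_algebra {α ε L : ℝ} (hα : 0 < α) (hα1 : α < 1) (hε : 0 < ε)
    (hcond : (π ^ 2 * ε ^ 2 + 1) * α ≥ 1) (hL : 1 ≤ L) :
    1 < ε ^ 2 * (π ^ 2 / L) + α * L := by
  have hL0 : (0:ℝ) < L := by linarith
  rw [div_eq_mul_inv, ← mul_assoc]
  have key : L < α * L ^ 2 + ε ^ 2 * π ^ 2 := by
    have hππ : 0 < π ^ 2 := by positivity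
    rcases le_or_gt α (1/2) with hc | hc
    · nlinarith [sq_nonneg (2 * α * L - 1), sq_nonneg ε, mul_pos hα hL0]
    · nlinarith [mul_nonneg (sub_nonneg.2 hL) (by nlinarith : (0:ℝ) ≤ α * (L + 1) - 1),
        mul_pos (mul_pos hππ (mul_pos hε hε)) hα]
  calc (1:ℝ) = L * L⁻¹ := by field_simp
  _ < (α * L ^ 2 + ε ^ 2 * π ^ 2) * L⁻¹ := by
      apply mul_lt_mul_of_pos_right key (by positivity)
  _ = ε ^ 2 * π ^ 2 * L⁻¹ + α * L := by field_simp; ring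

lemma aux_amgm {m R S lam : ℝ} (hR : 0 < R) (hRS : R ≤ S) (hlam : 0 < lam) (hm : 0 ≤ m) :
    m / S ^ 2 ≤ (m / R ^ 3) ^ 2 * R / (2 * lam) + lam * R / 2 := by
  have hS : 0 < S := lt_of_lt_of_le hR hRS
  have h1 : m / S ^ 2 ≤ m / R ^ 2 := by
    apply div_le_div_of_nonneg_left hm (by positivity)
    nlinarith
  refine h1.trans ?_
  have key : (m / R ^ 3) ^ 2 * R / (2 * lam) + lam * R / 2 - m / R ^ 2
      = (m - lam * R ^ 3) ^ 2 / (2 * lam * R ^ 5) := by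
    field_simp
    ring
  have hpos : (0:ℝ) ≤ (m - lam * R ^ 3) ^ 2 / (2 * lam * R ^ 5) :=
    div_nonneg (sq_nonneg _) (by positivity)
  linarith

lemma lower_bound (ψ : ℝ → ℝ) (hψ : Continuous ψ) (α ε : ℝ) (hα : 0 < α) (hα1 : α < 1)
    (hε : 0 < ε) (hcond : (π ^ 2 * ε ^ 2 + 1) * α ≥ 1) (γ : ℝ → ℝ × ℝ) (hγ : Admissible ψ γ)
    (t0 : ℝ) (ht0 : t0 ∈ Icc (0:ℝ) 1) (hx0 : (deriv γ t0).1 ≤ 0) :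
    1 < Energy ψ α ε γ := by
  obtain ⟨hγ2, hreg, hepi, hx0', hx1', hyper, hdper⟩ := hγ
  set p := deriv γ with hp
  set pp := deriv (deriv γ) with hpp
  -- basic smoothness
  have hd1 : ContDiff ℝ 1 p := by
    have : ContDiff ℝ (1 + 1) γ := by exact_mod_cast hγ2
    exact (contDiff_succ_iff_deriv.mp this).2.2
  have hdiffp : Differentiable ℝ p := (contDiff_one_iff_deriv.mp hd1).1
  have hcontp : Continuous p := hdiffp.continuous
  have hcontpp : Continuous pp := (contDiff_one_iff_deriv.mp hd1).2
  have hdiffγ : Differentiable ℝ γ := hγ2.differentiable (by norm_num)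
  have hγat : ∀ t, HasDerivAt γ (p t) t := fun t => (hdiffγ t).hasDerivAt
  have hpat : ∀ t, HasDerivAt p (pp t) t := fun t => (hdiffp t).hasDerivAt
  -- the open set U where the derivative does not vanish
  set U : Set ℝ := {t | p t ≠ 0} with hU
  have hUo : IsOpen U := isOpen_ne_fun hcontp continuous_const
  have hIccU : Icc (0:ℝ) 1 ⊆ U := fun t ht => hreg t ht
  -- Euclidean speed s and sup-norm speed r
  set s : ℝ → ℝ := fun t => Real.sqrt ((p t).1 ^ 2 + (p t).2 ^ 2) with hs
  set r : ℝ → ℝ := fun t => ‖p t‖ with hr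
  have hconts : Continuous s := by
    apply Real.continuous_sqrt.comp
    continuity
  have hcontr : Continuous r := hcontp.norm
  have hsq : ∀ t, s t ^ 2 = (p t).1 ^ 2 + (p t).2 ^ 2 := by
    intro t; exact Real.sq_sqrt (by positivity)
  have hspos : ∀ t ∈ U, 0 < s t := by
    intro t ht
    apply Real.sqrt_pos.2
    have : (p t).1 ≠ 0 ∨ (p t).2 ≠ 0 := by
      by_contra hcon
      push_neg at hcon
      exact ht (Prod.ext hcon.1 hcon.2)
    rcases this with h1 | h1
    · nlinarith [sq_nonneg (p t).2, sq_pos_of_ne_zero h1]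
    · nlinarith [sq_nonneg (p t).1, sq_pos_of_ne_zero h1]
  have hrpos : ∀ t ∈ U, 0 < r t := fun t ht => norm_pos_iff.2 ht
  have hrles : ∀ t, r t ≤ s t := by
    intro t
    have h1 : |(p t).1| ≤ s t := by
      rw [← Real.sqrt_sq_eq_abs]
      exact Real.sqrt_le_sqrt (by nlinarith [sq_nonneg (p t).2])
    have h2 : |(p t).2| ≤ s t := by
      rw [← Real.sqrt_sq_eq_abs]
      exact Real.sqrt_le_sqrt (by nlinarith [sq_nonneg (p t).1])
    calc r t = max |(p t).1| |(p t).2| := rfl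
    _ ≤ s t := max_le h1 h2
  -- curvature numerator and angle-derivative
  set N : ℝ → ℝ := fun t => (p t).1 * (pp t).2 - (p t).2 * (pp t).1 with hN
  have hcontN : Continuous N := by
    apply Continuous.sub
    · exact (continuous_fst.comp hcontp).mul (continuous_snd.comp hcontpp)
    · exact (continuous_snd.comp hcontp).mul (continuous_fst.comp hcontpp)
  set ω : ℝ → ℝ := fun t => N t / s t ^ 2 with hω
  have hcontω : ContinuousOn ω U := by
    apply ContinuousOn.div hcontN.continuousOn (by fun_prop)
    intro t ht
    exact pow_ne_zero 2 (ne_of_gt (hspos t ht))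
  have hωint : ∀ a b : ℝ, a ∈ Icc (0:ℝ) 1 → b ∈ Icc (0:ℝ) 1 →
      IntervalIntegrable ω volume a b := by
    intro a b ha hb
    exact ((hcontω.mono ((uIcc_subset_Icc ha hb).trans hIccU))).intervalIntegrable
  -- unit tangent
  set u : ℝ → ℝ := fun t => (p t).1 / s t with hu
  set v : ℝ → ℝ := fun t => (p t).2 / s t with hv
  have huv1 : ∀ t ∈ U, u t ^ 2 + v t ^ 2 = 1 := by
    intro t ht
    have h1 := hsq t
    have h2 := ne_of_gt (hspos t ht)
    rw [hu, hv]
    field_simp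
    linarith
  -- initial angle
  set z : ℂ := (u 0 : ℂ) + (v 0 : ℂ) * Complex.I with hz
  have h0U : (0:ℝ) ∈ U := hIccU ⟨le_refl 0, zero_le_one⟩
  have h1U : (1:ℝ) ∈ U := hIccU ⟨zero_le_one, le_refl 1⟩
  have hre : z.re = u 0 := by simp [hz]
  have him : z.im = v 0 := by simp [hz]
  have hzabs : ‖z‖ = 1 := by
    rw [Complex.norm_def, Complex.normSq_apply, hre, him]
    rw [show u 0 * u 0 + v 0 * v 0 = 1 by nlinarith [huv1 0 h0U]]
    exact Real.sqrt_one
  have hzne : z ≠ 0 := by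
    intro hcon
    rw [hcon] at hzabs
    simp at hzabs
  set φ0 : ℝ := Complex.arg z with hφ0
  have hcosφ0 : Real.cos φ0 = u 0 := by
    rw [hφ0, Complex.cos_arg hzne, hzabs]
    simp [hz]
  have hsinφ0 : Real.sin φ0 = v 0 := by
    rw [hφ0, Complex.sin_arg, hzabs]
    simp [hz]
  -- the angle lift
  set θ : ℝ → ℝ := fun t => φ0 + ∫ τ in (0:ℝ)..t, ω τ with hθ
  have hθ0 : θ 0 = φ0 := by simp [hθ]
  have hθat : ∀ t ∈ Icc (0:ℝ) 1, HasDerivAt θ (ω t) t := by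
    intro t ht
    apply HasDerivAt.const_add
    exact intervalIntegral.integral_hasDerivAt_right
      (hωint 0 t ⟨le_refl 0, zero_le_one⟩ ht)
      (hcontω.stronglyMeasurableAtFilter hUo t (hIccU ht))
      ((hcontω.continuousAt (hUo.mem_nhds (hIccU ht))))
  have hθcont : ContinuousOn θ (Icc (0:ℝ) 1) := fun t ht =>
    (hθat t ht).continuousAt.continuousWithinAt
  have hθftc : ∀ a b : ℝ, a ∈ Icc (0:ℝ) 1 → b ∈ Icc (0:ℝ) 1 →
      ∫ τ in a..b, ω τ = θ b - θ a := by
    intro a b ha hb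
    exact intervalIntegral.integral_eq_sub_of_hasDerivAt
      (fun x hx => hθat x (uIcc_subset_Icc ha hb hx)) (hωint a b ha hb)
  -- derivative of s
  have hsat : ∀ t ∈ U, HasDerivAt s (((p t).1 * (pp t).1 + (p t).2 * (pp t).2) / s t) t := by
    intro t ht
    have hq : HasDerivAt (fun t => (p t).1 ^ 2 + (p t).2 ^ 2)
        (2 * (p t).1 ^ 1 * (pp t).1 + 2 * (p t).2 ^ 1 * (pp t).2) t :=
      ((hasDerivAt_fst (hpat t)).pow 2).add ((hasDerivAt_snd (hpat t)).pow 2)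
    have hqpos : (0:ℝ) < (p t).1 ^ 2 + (p t).2 ^ 2 := by
      have := hspos t ht
      nlinarith [hsq t]
    have hder := (Real.hasDerivAt_sqrt (ne_of_gt hqpos)).comp t hq
    have hsne := ne_of_gt (hspos t ht)
    refine hder.congr_deriv (Eq.symm ?_)
    have hrw : Real.sqrt ((p t).1 ^ 2 + (p t).2 ^ 2) = s t := rfl
    rw [hrw]
    field_simp
  -- derivatives of u and v
  have huat : ∀ t ∈ U, HasDerivAt u (-(ω t) * v t) t := by
    intro t ht
    have hsne := ne_of_gt (hspos t ht)
    have := (hasDerivAt_fst (hpat t)).div (hsat t ht) hsne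
    refine this.congr_deriv (Eq.symm ?_)
    rw [hω, hN, hv]
    have h1 := hsq t
    field_simp
    linear_combination (-(pp t).1) * h1
  have hvat : ∀ t ∈ U, HasDerivAt v (ω t * u t) t := by
    intro t ht
    have hsne := ne_of_gt (hspos t ht)
    have := (hasDerivAt_snd (hpat t)).div (hsat t ht) hsne
    refine this.congr_deriv (Eq.symm ?_)
    rw [hω, hN, hu]
    have h1 := hsq t
    field_simp
    linear_combination (-(pp t).2) * h1
  -- the function g = u cos θ + v sin θ is constant ≡ 1
  set g : ℝ → ℝ := fun t => u t * Real.cos (θ t) + v t * Real.sin (θ t) with hg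
  have hgat : ∀ t ∈ Icc (0:ℝ) 1, HasDerivAt g 0 t := by
    intro t ht
    have htU : t ∈ U := hIccU ht
    have hcosat : HasDerivAt (fun t => Real.cos (θ t)) (-Real.sin (θ t) * ω t) t :=
      (Real.hasDerivAt_cos (θ t)).comp t (hθat t ht)
    have hsinat : HasDerivAt (fun t => Real.sin (θ t)) (Real.cos (θ t) * ω t) t :=
      (Real.hasDerivAt_sin (θ t)).comp t (hθat t ht)
    have hfull := ((huat t htU).mul hcosat).add ((hvat t htU).mul hsinat)
    refine hfull.congr_deriv (Eq.symm ?_)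
    ring
  have hgone : ∀ t ∈ Icc (0:ℝ) 1, g t = 1 := by
    have hconst := constant_of_has_deriv_right_zero
      (f := g) (a := 0) (b := 1)
      (fun t ht => (hgat t ht).continuousAt.continuousWithinAt)
      (fun t ht => (hgat t (Ico_subset_Icc_self ht)).hasDerivWithinAt)
    intro t ht
    rw [hconst t ht]
    have : g 0 = u 0 * u 0 + v 0 * v 0 := by
      rw [hg]; simp only [hθ0, hcosφ0, hsinφ0]
    rw [this]
    nlinarith [huv1 0 h0U]
  have hcossin : ∀ t ∈ Icc (0:ℝ) 1, Real.cos (θ t) = u t ∧ Real.sin (θ t) = v t := by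
    intro t ht
    have htU : t ∈ U := hIccU ht
    have h1 := huv1 t htU
    have h2 := Real.sin_sq_add_cos_sq (θ t)
    have h3 := hgone t ht
    simp only [hg] at h3
    have hc : (u t - Real.cos (θ t)) ^ 2 ≤ 0 := by
      nlinarith [sq_nonneg (v t - Real.sin (θ t))]
    have hs' : (v t - Real.sin (θ t)) ^ 2 ≤ 0 := by
      nlinarith [sq_nonneg (u t - Real.cos (θ t))]
    constructor
    · have := le_antisymm hc (sq_nonneg _)
      have := pow_eq_zero_iff (n := 2) (by norm_num) |>.1 this
      linarith [sub_eq_zero.1 this]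
    · have := le_antisymm hs' (sq_nonneg _)
      have := pow_eq_zero_iff (n := 2) (by norm_num) |>.1 this
      linarith [sub_eq_zero.1 this]
  have hxs : ∀ t ∈ Icc (0:ℝ) 1, (p t).1 = s t * Real.cos (θ t) := by
    intro t ht
    have hsne := ne_of_gt (hspos t (hIccU ht))
    rw [(hcossin t ht).1, hu]
    field_simp
  have hys : ∀ t ∈ Icc (0:ℝ) 1, (p t).2 = s t * Real.sin (θ t) := by
    intro t ht
    have hsne := ne_of_gt (hspos t (hIccU ht))
    rw [(hcossin t ht).2, hv]
    field_simp
  -- fundamental theorem of calculus for the coordinates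
  have hXftc : ∫ t in (0:ℝ)..1, (p t).1 = 1 := by
    rw [intervalIntegral.integral_eq_sub_of_hasDerivAt
      (f := fun t => (γ t).1) (fun t _ => hasDerivAt_fst (hγat t))
      ((continuous_fst.comp hcontp).intervalIntegrable 0 1)]
    rw [hx1', hx0']
    ring
  have hYftc : ∫ t in (0:ℝ)..1, (p t).2 = 0 := by
    rw [intervalIntegral.integral_eq_sub_of_hasDerivAt
      (f := fun t => (γ t).2) (fun t _ => hasDerivAt_snd (hγat t))
      ((continuous_snd.comp hcontp).intervalIntegrable 0 1)]
    rw [hyper]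
    ring
  have hIccInt : ∀ f : ℝ → ℝ, (∫ t in Icc (0:ℝ) 1, f t) = ∫ t in (0:ℝ)..1, f t := by
    intro f
    rw [intervalIntegral.integral_of_le zero_le_one, integral_Icc_eq_integral_Ioc]
  -- length
  set L : ℝ := ∫ t in Icc (0:ℝ) 1, r t with hLdef
  have hrabs : ∀ t, r t = max |(p t).1| |(p t).2| := fun t => rfl
  have hrint : IntegrableOn r (Icc (0:ℝ) 1) := hcontr.integrableOn_Icc
  have hxint : IntegrableOn (fun t => (p t).1) (Icc (0:ℝ) 1) :=
    (continuous_fst.comp hcontp).integrableOn_Icc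
  have hyint : IntegrableOn (fun t => (p t).2) (Icc (0:ℝ) 1) :=
    (continuous_snd.comp hcontp).integrableOn_Icc
  have hXIcc : ∫ t in Icc (0:ℝ) 1, (p t).1 = 1 := by
    rw [hIccInt]; exact hXftc
  have hYIcc : ∫ t in Icc (0:ℝ) 1, (p t).2 = 0 := by
    rw [hIccInt]; exact hYftc
  have hL1 : 1 ≤ L := by
    rw [← hXIcc, hLdef]
    apply setIntegral_mono_on hxint hrint measurableSet_Icc
    intro t _
    rw [hrabs t]
    exact (le_abs_self _).trans (le_max_left _ _)
  have hL0 : (0:ℝ) < L := by linarith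
  -- a point with positive cosine
  have ht1 : ∃ t1 ∈ Icc (0:ℝ) 1, 0 < Real.cos (θ t1) := by
    by_contra hcon
    push_neg at hcon
    have hneg : ∀ t ∈ Icc (0:ℝ) 1, (p t).1 ≤ 0 := by
      intro t ht
      rw [hxs t ht]
      exact mul_nonpos_of_nonneg_of_nonpos (le_of_lt (hspos t (hIccU ht))) (hcon t ht)
    have : ∫ t in Icc (0:ℝ) 1, (p t).1 ≤ 0 := setIntegral_nonpos measurableSet_Icc hneg
    rw [hXIcc] at this
    linarith
  -- a point where the sine vanishes
  have htc : ∃ tc ∈ Icc (0:ℝ) 1, Real.sin (θ tc) = 0 := by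
    by_contra hcon
    push_neg at hcon
    have hsincont : ContinuousOn (fun t => Real.sin (θ t)) (Icc (0:ℝ) 1) :=
      Real.continuous_sin.comp_continuousOn hθcont
    have h0Icc : (0:ℝ) ∈ Icc (0:ℝ) 1 := ⟨le_refl 0, zero_le_one⟩
    have hsign : (∀ t ∈ Icc (0:ℝ) 1, 0 < Real.sin (θ t)) ∨
        (∀ t ∈ Icc (0:ℝ) 1, Real.sin (θ t) < 0) := by
      rcases lt_trichotomy (Real.sin (θ 0)) 0 with h | h | h
      · right
        intro t ht
        rcases lt_trichotomy (Real.sin (θ t)) 0 with h' | h' | h'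
        · exact h'
        · exact absurd h' (hcon t ht)
        · exfalso
          have hsub : uIcc (0:ℝ) t ⊆ Icc (0:ℝ) 1 := uIcc_subset_Icc h0Icc ht
          have hmem : (0:ℝ) ∈ uIcc (Real.sin (θ 0)) (Real.sin (θ t)) := by
            rw [Set.mem_uIcc]
            left
            exact ⟨le_of_lt h, le_of_lt h'⟩
          obtain ⟨c, hcmem, hfc⟩ := intermediate_value_uIcc (hsincont.mono hsub) hmem
          exact hcon c (hsub hcmem) hfc
      · exact absurd h (hcon 0 h0Icc)
      · left
        intro t ht
        rcases lt_trichotomy (Real.sin (θ t)) 0 with h' | h' | h'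
        · exfalso
          have hsub : uIcc (0:ℝ) t ⊆ Icc (0:ℝ) 1 := uIcc_subset_Icc h0Icc ht
          have hmem : (0:ℝ) ∈ uIcc (Real.sin (θ 0)) (Real.sin (θ t)) := by
            rw [Set.mem_uIcc]
            right
            exact ⟨le_of_lt h', le_of_lt h⟩
          obtain ⟨c, hcmem, hfc⟩ := intermediate_value_uIcc (hsincont.mono hsub) hmem
          exact hcon c (hsub hcmem) hfc
        · exact absurd h' (hcon t ht)
        · exact h'
    have hvol : (volume (Icc (0:ℝ) 1)).toReal = 1 := by
      rw [Real.volume_Icc]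
      norm_num
    rcases hsign with hpos | hneg
    · have hy'pos : ∀ t ∈ Icc (0:ℝ) 1, 0 < (p t).2 := by
        intro t ht
        rw [hys t ht]
        exact mul_pos (hspos t (hIccU ht)) (hpos t ht)
      obtain ⟨tm, htm, hmin⟩ := isCompact_Icc.exists_isMinOn
        (⟨0, h0Icc⟩ : (Icc (0:ℝ) 1).Nonempty) (continuous_snd.comp hcontp).continuousOn
      have hcpos : 0 < (p tm).2 := hy'pos tm htm
      have hlow : (p tm).2 * 1 ≤ ∫ t in Icc (0:ℝ) 1, (p t).2 := by
        have := setIntegral_mono_on (integrableOn_const (hs := measure_Icc_lt_top.ne)) hyint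
          measurableSet_Icc (fun t ht => hmin ht)
        rwa [setIntegral_const, measureReal_def, hvol, smul_eq_mul, mul_comm] at this
      rw [hYIcc] at hlow
      linarith
    · have hy'neg : ∀ t ∈ Icc (0:ℝ) 1, (p t).2 < 0 := by
        intro t ht
        rw [hys t ht]
        exact mul_neg_of_pos_of_neg (hspos t (hIccU ht)) (hneg t ht)
      obtain ⟨tm, htm, hmax⟩ := isCompact_Icc.exists_isMaxOn
        (⟨0, h0Icc⟩ : (Icc (0:ℝ) 1).Nonempty) (continuous_snd.comp hcontp).continuousOn
      have hcneg : (p tm).2 < 0 := hy'neg tm htm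
      have hup : ∫ t in Icc (0:ℝ) 1, (p t).2 ≤ (p tm).2 * 1 := by
        have := setIntegral_mono_on hyint (integrableOn_const (hs := measure_Icc_lt_top.ne))
          measurableSet_Icc (fun t ht => hmax ht)
        rwa [setIntegral_const, measureReal_def, hvol, smul_eq_mul, mul_comm] at this
      rw [hYIcc] at hup
      linarith
  obtain ⟨t1, ht1m, ht1c⟩ := ht1
  obtain ⟨tc, htcm, htcs⟩ := htc
  have hcost0 : Real.cos (θ t0) ≤ 0 := by
    have hx0x := hx0
    rw [hxs t0 ht0] at hx0x
    by_contra hpos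
    push_neg at hpos
    nlinarith [hspos t0 (hIccU ht0)]
  have hBcases : Real.cos (θ tc) = 1 ∨ Real.cos (θ tc) = -1 := by
    have h2 := Real.sin_sq_add_cos_sq (θ tc)
    rw [htcs] at h2
    have : (Real.cos (θ tc) - 1) * (Real.cos (θ tc) + 1) = 0 := by nlinarith
    rcases mul_eq_zero.1 this with h | h
    · left; linarith
    · right; linarith
  have hkey : ∀ x : ℝ, Real.cos x = Real.cos (x - θ tc) * Real.cos (θ tc) := by
    intro x
    conv_lhs => rw [show x = (x - θ tc) + θ tc by ring]
    rw [Real.cos_add, htcs]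
    ring
  have hgap : ∃ ta ∈ Icc (0:ℝ) 1, ∃ tb ∈ Icc (0:ℝ) 1, π / 2 ≤ |θ ta - θ tb| := by
    rcases hBcases with hB | hB
    · refine ⟨t0, ht0, tc, htcm, ?_⟩
      by_contra hlt
      push_neg at hlt
      rw [abs_lt] at hlt
      have hcpos : 0 < Real.cos (θ t0 - θ tc) :=
        Real.cos_pos_of_mem_Ioo ⟨by linarith [hlt.1], by linarith [hlt.2]⟩
      have := hkey (θ t0)
      rw [hB, mul_one] at this
      linarith
    · refine ⟨t1, ht1m, tc, htcm, ?_⟩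
      by_contra hlt
      push_neg at hlt
      rw [abs_lt] at hlt
      have hcpos : 0 < Real.cos (θ t1 - θ tc) :=
        Real.cos_pos_of_mem_Ioo ⟨by linarith [hlt.1], by linarith [hlt.2]⟩
      have := hkey (θ t1)
      rw [hB] at this
      nlinarith
  -- periodicity of the angle
  have hn : ∃ n : ℤ, θ 1 = θ 0 + n * (2 * π) := by
    have hp01 : p 0 = p 1 := hdper
    have hs01 : s 1 = s 0 := by
      show Real.sqrt ((p 1).1 ^ 2 + (p 1).2 ^ 2) = Real.sqrt ((p 0).1 ^ 2 + (p 0).2 ^ 2)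
      rw [hp01]
    have hu01 : u 1 = u 0 := by
      show (p 1).1 / s 1 = (p 0).1 / s 0
      rw [hp01, hs01]
    have hv01 : v 1 = v 0 := by
      show (p 1).2 / s 1 = (p 0).2 / s 0
      rw [hp01, hs01]
    have h0I : (0:ℝ) ∈ Icc (0:ℝ) 1 := ⟨le_refl 0, zero_le_one⟩
    have h1I : (1:ℝ) ∈ Icc (0:ℝ) 1 := ⟨zero_le_one, le_refl 1⟩
    have hc01 : Real.cos (θ 1) = Real.cos (θ 0) := by
      rw [(hcossin 1 h1I).1, (hcossin 0 h0I).1, hu01]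
    have hs01' : Real.sin (θ 1) = Real.sin (θ 0) := by
      rw [(hcossin 1 h1I).2, (hcossin 0 h0I).2, hv01]
    have hexp : Complex.exp ((θ 1 : ℂ) * Complex.I) = Complex.exp ((θ 0 : ℂ) * Complex.I) := by
      rw [Complex.exp_mul_I, Complex.exp_mul_I, ← Complex.ofReal_cos, ← Complex.ofReal_sin,
        ← Complex.ofReal_cos, ← Complex.ofReal_sin, hc01, hs01']
    obtain ⟨n, hnc⟩ := Complex.exp_eq_exp_iff_exists_int.1 hexp
    refine ⟨n, ?_⟩
    have hcc : ((θ 1 : ℝ) : ℂ) = ((θ 0 + n * (2 * π) : ℝ) : ℂ) := by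
      have h2 : ((θ 1 : ℝ) : ℂ) * Complex.I = ((θ 0 + n * (2 * π) : ℝ) : ℂ) * Complex.I := by
        push_cast
        linear_combination hnc
      exact mul_right_cancel₀ Complex.I_ne_zero h2
    exact_mod_cast hcc
  -- total variation
  set V : ℝ := ∫ t in (0:ℝ)..1, |ω t| with hVdef
  have habsint : ∀ a b : ℝ, a ∈ Icc (0:ℝ) 1 → b ∈ Icc (0:ℝ) 1 →
      IntervalIntegrable (fun t => |ω t|) volume a b := fun a b ha hb => (hωint a b ha hb).abs
  have hbound : ∀ a b : ℝ, a ∈ Icc (0:ℝ) 1 → b ∈ Icc (0:ℝ) 1 → a ≤ b →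
      |θ b - θ a| ≤ ∫ t in a..b, |ω t| := by
    intro a b ha hb hab
    rw [← hθftc a b ha hb]
    exact intervalIntegral.abs_integral_le_integral_abs hab
  have h0I : (0:ℝ) ∈ Icc (0:ℝ) 1 := ⟨le_refl 0, zero_le_one⟩
  have h1I : (1:ℝ) ∈ Icc (0:ℝ) 1 := ⟨zero_le_one, le_refl 1⟩
  have hπV : π ≤ V := by
    obtain ⟨ta, hta, tb, htb, hgapv⟩ := hgap
    obtain ⟨n, hn01⟩ := hn
    rcases eq_or_ne n 0 with hn0 | hn0
    · -- closed lift: sum of three pieces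
      rw [hn0] at hn01
      push_cast at hn01
      rw [zero_mul, add_zero] at hn01
      set a : ℝ := min ta tb with hadef
      set b : ℝ := max ta tb with hbdef
      have haI : a ∈ Icc (0:ℝ) 1 := ⟨le_min hta.1 htb.1, (min_le_left _ _).trans hta.2⟩
      have hbI : b ∈ Icc (0:ℝ) 1 := ⟨hta.1.trans (le_max_left _ _), max_le hta.2 htb.2⟩
      have hab : a ≤ b := min_le_max
      have habs : |θ b - θ a| = |θ ta - θ tb| := by
        rcases le_total ta tb with h | h
        · rw [show a = ta from min_eq_left h, show b = tb from max_eq_right h, abs_sub_comm]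
        · rw [show a = tb from min_eq_right h, show b = ta from max_eq_left h]
      have hsplit1 : (∫ t in (0:ℝ)..b, |ω t|) = (∫ t in (0:ℝ)..a, |ω t|) + ∫ t in a..b, |ω t| :=
        (intervalIntegral.integral_add_adjacent_intervals (habsint 0 a h0I haI)
          (habsint a b haI hbI)).symm
      have hsplit2 : V = (∫ t in (0:ℝ)..b, |ω t|) + ∫ t in b..1, |ω t| :=
        (intervalIntegral.integral_add_adjacent_intervals (habsint 0 b h0I hbI)
          (habsint b 1 hbI h1I)).symm
      have e1 : |θ a - θ 0| ≤ ∫ t in (0:ℝ)..a, |ω t| := hbound 0 a h0I haI haI.1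
      have e2 : |θ b - θ a| ≤ ∫ t in a..b, |ω t| := hbound a b haI hbI hab
      have e3 : |θ 1 - θ b| ≤ ∫ t in b..1, |ω t| := hbound b 1 hbI h1I hbI.2
      have tri : |θ a - θ b| ≤ |θ a - θ 0| + |θ 0 - θ b| := abs_sub_le _ _ _
      have habs2 : |θ 0 - θ b| = |θ 1 - θ b| := by rw [hn01]
      have habs3 : |θ a - θ b| = |θ b - θ a| := abs_sub_comm _ _
      rw [hsplit2, hsplit1]
      rw [habs] at e2 habs3
      linarith [hgapv, abs_sub_comm (θ ta) (θ tb)]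
    · -- nonzero winding
      have hbig : |θ 1 - θ 0| ≤ V := hbound 0 1 h0I h1I zero_le_one
      rw [hn01] at hbig
      have : |(n : ℝ) * (2 * π)| = |(n : ℝ)| * (2 * π) := by
        rw [abs_mul, abs_of_pos (by positivity : (0:ℝ) < 2 * π)]
      have hn1 : (1:ℝ) ≤ |(n : ℝ)| := by
        rw [← Int.cast_abs]
        exact_mod_cast Int.one_le_abs hn0
      have hπ : 0 < π := Real.pi_pos
      rw [show θ 0 + (n:ℝ) * (2 * π) - θ 0 = (n:ℝ) * (2 * π) by ring, this] at hbig
      nlinarith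
  -- Cauchy–Schwarz via AM-GM
  have hVpos : 0 < V := lt_of_lt_of_le Real.pi_pos hπV
  set K : ℝ := ∫ t in Icc (0:ℝ) 1, curvature γ t ^ 2 * r t with hKdef
  have hcurvr : ∀ t, curvature γ t = N t / r t ^ 3 := fun t => rfl
  have hcontκ : ContinuousOn (fun t => curvature γ t ^ 2 * r t) (Icc (0:ℝ) 1) := by
    apply ContinuousOn.mul ?_ hcontr.continuousOn
    apply ContinuousOn.pow
    refine ContinuousOn.congr (hcontN.continuousOn.div (hcontr.pow 3).continuousOn
      (fun t ht => pow_ne_zero 3 (ne_of_gt (hrpos t (hIccU ht))))) ?_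
    intro t _
    exact hcurvr t
  have hκint : IntegrableOn (fun t => curvature γ t ^ 2 * r t) (Icc (0:ℝ) 1) :=
    hcontκ.integrableOn_Icc
  have hptw : ∀ t ∈ Icc (0:ℝ) 1,
      |ω t| ≤ (curvature γ t ^ 2 * r t) / (2 * (V / L)) + (V / L) * r t / 2 := by
    intro t ht
    have htU : t ∈ U := hIccU ht
    have hlam : 0 < V / L := div_pos hVpos hL0
    have hωabs : |ω t| = |N t| / s t ^ 2 := by
      rw [hω]
      rw [abs_div, abs_of_pos (pow_pos (hspos t htU) 2)]
    have h := aux_amgm (hrpos t htU) (hrles t) hlam (abs_nonneg (N t))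
    rw [hωabs]
    refine h.trans (le_of_eq ?_)
    have hNr : (|N t| / r t ^ 3) ^ 2 = curvature γ t ^ 2 := by
      rw [hcurvr, div_pow, div_pow, sq_abs]
    rw [hNr]
  have hVint : V = ∫ t in Icc (0:ℝ) 1, |ω t| := by rw [hIccInt]
  have hωabsI : IntegrableOn (fun t => |ω t|) (Icc (0:ℝ) 1) :=
    ((hcontω.mono hIccU).abs).integrableOn_Icc
  have hmono : V ≤ K / (2 * (V / L)) + (V / L) * L / 2 := by
    have hRHSint : IntegrableOn
        (fun t => (curvature γ t ^ 2 * r t) / (2 * (V / L)) + (V / L) * r t / 2)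
        (Icc (0:ℝ) 1) := by
      apply Integrable.add
      · exact hκint.div_const _
      · exact ((hrint.const_mul (V / L)).div_const 2)
    have hmm := setIntegral_mono_on hωabsI hRHSint measurableSet_Icc hptw
    rw [← hVint] at hmm
    refine hmm.trans (le_of_eq ?_)
    rw [integral_add (hκint.div_const _) ((hrint.const_mul (V / L)).div_const 2), integral_div,
      show (fun t => (V / L) * r t / 2) = fun t => (V / (L * 2)) * r t from funext fun t => by ring,
      integral_const_mul, ← hKdef, ← hLdef]
    ring
  have hV2 : V ^ 2 ≤ K * L := by
    have hLne : L ≠ 0 := ne_of_gt hL0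
    have hVne : V ≠ 0 := ne_of_gt hVpos
    have h1 : K / (2 * (V / L)) = K * L / (2 * V) := by
      field_simp
    have h2 : (V / L) * L / 2 = V / 2 := by field_simp
    rw [h1, h2] at hmono
    have h3 : V / 2 ≤ K * L / (2 * V) := by linarith
    rw [div_le_div_iff₀ (by norm_num : (0:ℝ) < 2) (by linarith : (0:ℝ) < 2 * V)] at h3
    nlinarith
  have hπ2 : π ^ 2 ≤ K * L :=
    le_trans (pow_le_pow_left₀ (le_of_lt Real.pi_pos) hπV 2) hV2
  have hKge : π ^ 2 / L ≤ K := (div_le_iff₀ hL0).2 hπ2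
  -- contact potential term
  set W : ℝ := ∫ t in Icc (0:ℝ) 1, contactPotential ψ α (γ t) * r t with hWdef
  have hΘmeas : Measurable (fun t => contactPotential ψ α (γ t)) := by
    unfold contactPotential
    apply Measurable.ite ?_ measurable_const measurable_const
    exact (isClosed_eq (continuous_snd.comp hγ2.continuous)
      (hψ.comp (continuous_fst.comp hγ2.continuous))).measurableSet
  have hΘbd : ∀ q : ℝ × ℝ, α ≤ contactPotential ψ α q ∧ contactPotential ψ α q ≤ 1 := by
    intro q
    unfold contactPotential
    split <;> constructor <;> linarith
  obtain ⟨tM, htM, hMax⟩ := isCompact_Icc.exists_isMaxOn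
    (⟨0, h0I⟩ : (Icc (0:ℝ) 1).Nonempty) hcontr.continuousOn
  have hΘrint : IntegrableOn (fun t => contactPotential ψ α (γ t) * r t) (Icc (0:ℝ) 1) := by
    apply Integrable.mono' (integrable_const (r tM))
      ((hΘmeas.mul hcontr.measurable).aestronglyMeasurable)
    filter_upwards [ae_restrict_mem measurableSet_Icc] with t ht
    have h1 := hΘbd (γ t)
    have h2 : 0 ≤ r t := norm_nonneg _
    have h3 : r t ≤ r tM := hMax ht
    simp only [Real.norm_eq_abs, Pi.mul_apply]; rw [abs_mul, abs_of_nonneg (by linarith [h1.1] : (0:ℝ) ≤ contactPotential ψ α (γ t)), abs_of_nonneg h2]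
    calc contactPotential ψ α (γ t) * r t ≤ 1 * r t := mul_le_mul_of_nonneg_right h1.2 h2
    _ = r t := one_mul _
    _ ≤ r tM := h3
  have hWα : α * L ≤ W := by
    rw [hWdef, hLdef, ← integral_const_mul]
    apply setIntegral_mono_on (hrint.const_mul α) hΘrint measurableSet_Icc
    intro t ht
    exact mul_le_mul_of_nonneg_right (hΘbd (γ t)).1 (norm_nonneg _)
  -- energy splitting
  have hsplitE : Energy ψ α ε γ = ε ^ 2 * K + W := by
    unfold Energy
    rw [hKdef, hWdef]
    have h1 : ∀ t ∈ Icc (0:ℝ) 1, (ε ^ 2 * curvature γ t ^ 2 + contactPotential ψ α (γ t)) * ‖deriv γ t‖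
        = ε ^ 2 * (curvature γ t ^ 2 * r t) + contactPotential ψ α (γ t) * r t := by
      intro t _
      show _ = ε ^ 2 * (curvature γ t ^ 2 * ‖p t‖) + contactPotential ψ α (γ t) * ‖p t‖
      rw [hp]
      ring
    rw [setIntegral_congr_fun measurableSet_Icc h1]
    rw [integral_add (hκint.const_mul _) hΘrint, integral_const_mul]
  rw [hsplitE]
  calc (1:ℝ) < ε ^ 2 * (π ^ 2 / L) + α * L := aux_algebra hα hα1 hε hcond hL1
  _ ≤ ε ^ 2 * K + W :=
      add_le_add (mul_le_mul_of_nonneg_left hKge (by positivity)) hWα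

lemma competitor (ψ : ℝ → ℝ) (hψ : Continuous ψ) (α ε : ℝ) (hα : 0 < α) (hα1 : α < 1) :
    ∃ γ₀ : ℝ → ℝ × ℝ, Admissible ψ γ₀ ∧ Energy ψ α ε γ₀ ≤ 1 := by
  obtain ⟨m, -, hm⟩ := isCompact_Icc.exists_isMaxOn (⟨0, by norm_num⟩ : (Icc (0:ℝ) 1).Nonempty)
    hψ.continuousOn
  set c : ℝ := ψ m + 1 with hc
  refine ⟨fun t => (t, c), ?_, ?_⟩
  · have hd : ∀ t : ℝ, HasDerivAt (fun t : ℝ => (t, c)) ((1:ℝ), (0:ℝ)) t := fun t =>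
      (hasDerivAt_id t).prodMk (hasDerivAt_const t c)
    have hder : deriv (fun t : ℝ => (t, c)) = fun _ => ((1:ℝ), (0:ℝ)) :=
      funext fun t => (hd t).deriv
    refine ⟨contDiff_id.prodMk contDiff_const, ?_, ?_, rfl, rfl, rfl, by rw [hder]⟩
    · intro t _; rw [hder]; simp
    · intro t ht; simp only
      have := hm ht; simp only [c]; dsimp at this ⊢; linarith
  · have hd : ∀ t : ℝ, HasDerivAt (fun t : ℝ => (t, c)) ((1:ℝ), (0:ℝ)) t := fun t =>
      (hasDerivAt_id t).prodMk (hasDerivAt_const t c)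
    have hder : deriv (fun t : ℝ => (t, c)) = fun _ => ((1:ℝ), (0:ℝ)) :=
      funext fun t => (hd t).deriv
    have hcurv : ∀ t : ℝ, curvature (fun t : ℝ => (t, c)) t = 0 := by
      intro t
      unfold curvature
      rw [hder, deriv_const']
      simp
    have hnorm : ‖((1:ℝ), (0:ℝ))‖ = 1 := by
      simp [Prod.norm_def]
    unfold Energy
    have hb : ∀ t ∈ Icc (0:ℝ) 1,
        (ε ^ 2 * curvature (fun t : ℝ => (t, c)) t ^ 2
          + contactPotential ψ α ((fun t : ℝ => (t, c)) t)) * ‖deriv (fun t : ℝ => (t, c)) t‖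
          ≤ 1 := by
      intro t _
      rw [hcurv, hder, hnorm]
      simp only [mul_one, mul_zero]
      unfold contactPotential
      ring_nf
      split <;> linarith
    calc ∫ t in Icc (0:ℝ) 1,
        (ε ^ 2 * curvature (fun t : ℝ => (t, c)) t ^ 2
          + contactPotential ψ α ((fun t : ℝ => (t, c)) t)) * ‖deriv (fun t : ℝ => (t, c)) t‖
        ≤ ∫ _t in Icc (0:ℝ) 1, (1:ℝ) := by
          apply setIntegral_mono_on ?_ (integrableOn_const (hs := measure_Icc_lt_top.ne))
            measurableSet_Icc hb
          · -- integrability of the energy integrand of the line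
            have : ∀ t : ℝ, (ε ^ 2 * curvature (fun t : ℝ => (t, c)) t ^ 2
                + contactPotential ψ α ((fun t : ℝ => (t, c)) t)) * ‖deriv (fun t : ℝ => (t, c)) t‖
                = contactPotential ψ α (t, c) := by
              intro t
              rw [hcurv, hder, hnorm]
              simp
            simp only [this]
            have hmeas : Measurable fun t : ℝ => contactPotential ψ α (t, c) := by
              unfold contactPotential
              exact Measurable.ite (isClosed_eq continuous_const (hψ.comp continuous_id)).measurableSet
                measurable_const measurable_const
            refine ⟨hmeas.aestronglyMeasurable, ?_⟩
            have : ∀ t : ℝ, ‖contactPotential ψ α (t, c)‖ ≤ 1 := by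
              intro t; unfold contactPotential
              rw [Real.norm_eq_abs, abs_le]
              constructor <;> [skip; skip] <;> split <;> linarith
            exact (HasFiniteIntegral.restrict_of_bounded (C := 1) (by rw [Real.volume_Icc]; exact ENNReal.ofReal_lt_top)
              (Filter.Eventually.of_forall fun t => this t))
      _ = 1 := by simp
  done


/-- If (π²ε² + 1)α ≥ 1 then, independently of ψ, any global minimizer of E is a
graph curve. -/
theorem graph_representation_of_minimizers (ψ : ℝ → ℝ) (hψ : Continuous ψ)
    (hper : Function.Periodic ψ 1) (α ε : ℝ) (hα : 0 < α) (hα1 : α < 1) (hε : 0 < ε)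
    (hcond : (π ^ 2 * ε ^ 2 + 1) * α ≥ 1)
    (γ : ℝ → ℝ × ℝ) (hγ : Admissible ψ γ)
    (hmin : ∀ γ' : ℝ → ℝ × ℝ, Admissible ψ γ' → Energy ψ α ε γ ≤ Energy ψ α ε γ') :
    IsGraph γ := by
  intro t ht
  by_contra hpos
  push_neg at hpos
  obtain ⟨γ₀, hadm, hE⟩ := competitor ψ hψ α ε hα hα1
  have h1 := hmin γ₀ hadm
  have h2 := lower_bound ψ hψ α ε hα hα1 hε hcond γ hγ t ht hpos
  linarith

end
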